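/- If a finite group G admits a 1-rotational 2-factorization of the complete graph on G ∪ {∞}, then for every n ≥ 1 the group G × ℤ_n admits a 1-rotational 2n-factorization of the complete graph on (G × ℤ_n) ∪ {∞}. -/

import Mathlib

open SimpleGraph

/-- The image of a graph on `G ∪ {∞}` under right multiplication by `g` (with `∞ g = ∞`). -/
def shiftG {G : Type*} [Group G] (F : SimpleGraph (Option G)) (g : G) :
    SimpleGraph (Option G) :=
  F.map (Equiv.optionCongr (Equiv.mulRight g)).toEmbedding

/-- The `G`-stabilizer of a graph on `G ∪ {∞}`. -/
def stabG {G : Type*} [Group G] (F : SimpleGraph (Option G)) : Set G :=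
  {g | shiftG F g = F}

/-- A `k`-factor: a spanning `k`-regular subgraph of the complete graph. -/
def IsKFactor {V : Type*} (k : ℕ) (F : SimpleGraph V) : Prop :=
  ∀ v : V, (F.neighborSet v).ncard = k

/-- A `k`-factorization: a set of `k`-factors whose edges partition the complete graph. -/
def IsKFactorization {V : Type*} (k : ℕ) (𝓕 : Set (SimpleGraph V)) : Prop :=
  (∀ F ∈ 𝓕, IsKFactor k F) ∧
  ∀ u v : V, u ≠ v → ∃! F, F ∈ 𝓕 ∧ F.Adj u v

/-- A family of graphs on `G ∪ {∞}` is `1`-rotational if it is closed under the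
right multiplication action of `G`. -/
def IsRotational {G : Type*} [Group G] (𝓕 : Set (SimpleGraph (Option G))) : Prop :=
  ∀ F ∈ 𝓕, ∀ g : G, shiftG F g ∈ 𝓕

/-- The difference list of a graph on `G ∪ {∞}` covers every nonidentity element of `G`. -/
def DiffCovers {G : Type*} [Group G] (F : SimpleGraph (Option G)) : Prop :=
  ∀ d : G, d ≠ 1 → ∃ a b : G, F.Adj (some a) (some b) ∧ a * b⁻¹ = d

/-- A `k`-starter under `G`: a `k`-factor whose `G`-stabilizer has order `k` and whose
difference list covers `G ∖ {1}`. -/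
def IsStarter {G : Type*} [Group G] (k : ℕ) (F : SimpleGraph (Option G)) : Prop :=
  IsKFactor k F ∧ (stabG F).ncard = k ∧ DiffCovers F

/-- The graph `H` on `(G × ℤ_n) ∪ {∞}` constructed from a `2`-factor `F` of the complete
graph on `G ∪ {∞}`: join `∞` to `(x,k)` for `x ~ ∞` in `F`; join `(x,k)` to `(x,r)` for
`x ~ ∞` in `F` and `k ≠ r`; join `(x,k)` to `(y,r)` for every edge `[x,y]` of `F`
avoiding `∞`. -/
def Hgraph {G : Type*} [Group G] (F : SimpleGraph (Option G)) (n : ℕ) :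
    SimpleGraph (Option (G × Multiplicative (ZMod n))) :=
  SimpleGraph.fromRel (fun u v =>
    (∃ (x : G) (k : Multiplicative (ZMod n)),
        F.Adj none (some x) ∧ u = none ∧ v = some (x, k)) ∨
    (∃ (x : G) (k r : Multiplicative (ZMod n)),
        F.Adj none (some x) ∧ k ≠ r ∧ u = some (x, k) ∧ v = some (x, r)) ∨
    (∃ (x y : G) (k r : Multiplicative (ZMod n)),
        F.Adj (some x) (some y) ∧ u = some (x, k) ∧ v = some (y, r)))

section Aux
open Set
variable {G : Type*} [Group G]

lemma shiftG_adj (F : SimpleGraph (Option G)) (g : G) (u v : Option G) :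
    (shiftG F g).Adj u v ↔ F.Adj (u.map (· * g⁻¹)) (v.map (· * g⁻¹)) := by
  constructor
  · rintro ⟨-, a, b, h, rfl, rfl⟩
    simpa [Option.map_map, Function.comp] using h
  · intro h
    exact ⟨fun e => h.ne (by rw [e]), u.map (· * g⁻¹), v.map (· * g⁻¹), h, by cases u <;> simp, by cases v <;> simp⟩

lemma Hgraph_adj_none_some (F : SimpleGraph (Option G)) {n : ℕ} (x : G)
    (k : Multiplicative (ZMod n)) :
    (Hgraph F n).Adj none (some (x, k)) ↔ F.Adj none (some x) := by
  unfold Hgraph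
  rw [SimpleGraph.fromRel_adj]
  aesop

lemma Hgraph_adj_some_none (F : SimpleGraph (Option G)) {n : ℕ} (x : G)
    (k : Multiplicative (ZMod n)) :
    (Hgraph F n).Adj (some (x, k)) none ↔ F.Adj none (some x) := by
  rw [SimpleGraph.adj_comm, Hgraph_adj_none_some]

lemma Hgraph_adj_none_none (F : SimpleGraph (Option G)) {n : ℕ} :
    ¬ (Hgraph F n).Adj none none := SimpleGraph.irrefl _

lemma Hgraph_adj_some_some (F : SimpleGraph (Option G)) {n : ℕ} (x y : G)
    (k r : Multiplicative (ZMod n)) :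
    (Hgraph F n).Adj (some (x, k)) (some (y, r)) ↔
      ((x = y ∧ k ≠ r ∧ F.Adj none (some x)) ∨ F.Adj (some x) (some y)) := by
  unfold Hgraph
  rw [SimpleGraph.fromRel_adj]
  constructor
  · rintro ⟨hne, h | h⟩
    · rcases h with ⟨_, _, _, h, _⟩ | ⟨x', k', r', ha, hkr, h1, h2⟩ | ⟨x', y', k', r', ha, h1, h2⟩
      · simp at h
      · simp only [Option.some.injEq, Prod.mk.injEq] at h1 h2
        exact Or.inl ⟨h1.1.trans h2.1.symm, h1.2 ▸ h2.2 ▸ hkr, h1.1 ▸ ha⟩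
      · simp only [Option.some.injEq, Prod.mk.injEq] at h1 h2
        exact Or.inr (h1.1 ▸ h2.1 ▸ ha)
    · rcases h with ⟨_, _, _, h, _⟩ | ⟨x', k', r', ha, hkr, h1, h2⟩ | ⟨x', y', k', r', ha, h1, h2⟩
      · simp at h
      · simp only [Option.some.injEq, Prod.mk.injEq] at h1 h2
        exact Or.inl ⟨h2.1.trans h1.1.symm, (h2.2 ▸ h1.2 ▸ hkr).symm, h2.1 ▸ ha⟩
      · simp only [Option.some.injEq, Prod.mk.injEq] at h1 h2
        exact Or.inr (h2.1 ▸ h1.1 ▸ ha).symm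
  · rintro (⟨rfl, hkr, ha⟩ | ha)
    · exact ⟨by simp [hkr], Or.inl (Or.inr (Or.inl ⟨x, k, r, ha, hkr, rfl, rfl⟩))⟩
    · have hxy : x ≠ y := fun h => (h ▸ ha).ne rfl
      exact ⟨by simp [hxy], Or.inl (Or.inr (Or.inr ⟨x, y, k, r, ha, rfl, rfl⟩))⟩

end Aux
section Aux2
open Set
variable {G : Type*} [Group G]

lemma shiftG_Hgraph (F : SimpleGraph (Option G)) (n : ℕ) (g : G)
    (t : Multiplicative (ZMod n)) :
    shiftG (Hgraph F n) (g, t) = Hgraph (shiftG F g) n := by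
  ext u v
  rw [shiftG_adj]
  rcases u with _ | ⟨x, k⟩ <;> rcases v with _ | ⟨y, r⟩
  · simp [Hgraph_adj_none_none]
  · simp only [Option.map_none, Option.map_some]
    rw [Hgraph_adj_none_some, Hgraph_adj_none_some, shiftG_adj]
    simp [Prod.inv_mk]
  · simp only [Option.map_none, Option.map_some]
    rw [Hgraph_adj_some_none, Hgraph_adj_some_none, shiftG_adj]
    simp [Prod.inv_mk]
  · simp only [Option.map_some]
    rw [Hgraph_adj_some_some, Hgraph_adj_some_some, shiftG_adj, shiftG_adj]
    simp [Prod.inv_mk, mul_left_inj]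

end Aux2
section Aux3
open Set
variable {G : Type*} [Group G]

lemma ncard_sprod {α β : Type*} (s : Set α) (t : Set β) :
    (s ×ˢ t).ncard = s.ncard * t.ncard := by
  rw [← Nat.card_coe_set_eq, ← Nat.card_coe_set_eq, ← Nat.card_coe_set_eq,
    Nat.card_congr (Equiv.Set.prod s t), Nat.card_prod]

lemma neighborSet_none_eq (F : SimpleGraph (Option G)) :
    F.neighborSet none = some '' {x : G | F.Adj none (some x)} := by
  ext a
  rcases a with _ | x
  · simp [SimpleGraph.mem_neighborSet, F.irrefl]
  · simp [SimpleGraph.mem_neighborSet]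

lemma card_N (F : SimpleGraph (Option G)) (hF : IsKFactor 2 F) :
    ({x : G | F.Adj none (some x)}).ncard = 2 := by
  have h := hF none
  rwa [neighborSet_none_eq, ncard_image_of_injective _ (Option.some_injective _)] at h

lemma card_M_adj [Fintype G] (F : SimpleGraph (Option G)) (hF : IsKFactor 2 F) (x : G)
    (hx : F.Adj none (some x)) :
    ({y : G | F.Adj (some x) (some y)}).ncard = 1 := by
  have h := hF (some x)
  have he : F.neighborSet (some x)
      = insert none (some '' {y : G | F.Adj (some x) (some y)}) := by
    ext a
    rcases a with _ | y
    · simp [SimpleGraph.mem_neighborSet, hx.symm]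
    · simp [SimpleGraph.mem_neighborSet]
  rw [he, ncard_insert_of_notMem (by simp),
    ncard_image_of_injective _ (Option.some_injective _)] at h
  omega

lemma card_M_nonadj [Fintype G] (F : SimpleGraph (Option G)) (hF : IsKFactor 2 F) (x : G)
    (hx : ¬ F.Adj none (some x)) :
    ({y : G | F.Adj (some x) (some y)}).ncard = 2 := by
  have h := hF (some x)
  have he : F.neighborSet (some x) = some '' {y : G | F.Adj (some x) (some y)} := by
    ext a
    rcases a with _ | y
    · simp only [SimpleGraph.mem_neighborSet, mem_image, reduceCtorEq, and_false,
        exists_false, iff_false]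
      exact fun h => hx h.symm
    · simp [SimpleGraph.mem_neighborSet]
  rwa [he, ncard_image_of_injective _ (Option.some_injective _)] at h

lemma ncard_univ_mult (n : ℕ) [NeZero n] :
    (univ : Set (Multiplicative (ZMod n))).ncard = n := by
  simp [Set.ncard_univ, Nat.card_eq_fintype_card, ZMod.card]

lemma ncard_compl_singleton {n : ℕ} [NeZero n] (k : Multiplicative (ZMod n)) :
    ({k}ᶜ : Set (Multiplicative (ZMod n))).ncard = n - 1 := by
  rw [Set.compl_eq_univ_diff, Set.ncard_diff (subset_univ _), ncard_univ_mult, ncard_singleton]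

lemma Hdeg [Fintype G] (F : SimpleGraph (Option G)) (hF : IsKFactor 2 F) (n : ℕ) [NeZero n]
    (hn : 1 ≤ n) : IsKFactor (2 * n) (Hgraph F n) := by
  intro v
  rcases v with _ | ⟨x, k⟩
  · have he : (Hgraph F n).neighborSet none
        = some '' ({x : G | F.Adj none (some x)} ×ˢ (univ : Set (Multiplicative (ZMod n)))) := by
      ext w
      rcases w with _ | ⟨y, r⟩
      · simp [SimpleGraph.mem_neighborSet, Hgraph_adj_none_none F]
      · simp [SimpleGraph.mem_neighborSet, Hgraph_adj_none_some F]
    rw [he, ncard_image_of_injective _ (Option.some_injective _), ncard_sprod,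
      card_N F hF, ncard_univ_mult]
  · by_cases hx : F.Adj none (some x)
    · have he : (Hgraph F n).neighborSet (some (x, k))
          = insert none (some '' (({x} ×ˢ ({k}ᶜ : Set (Multiplicative (ZMod n))))
            ∪ ({y : G | F.Adj (some x) (some y)} ×ˢ univ))) := by
        ext w
        rcases w with _ | ⟨y, r⟩
        · simp [SimpleGraph.mem_neighborSet, Hgraph_adj_some_none F, hx]
        · simp only [SimpleGraph.mem_neighborSet, Hgraph_adj_some_some F, mem_insert_iff,
            mem_image, mem_union, mem_prod, mem_singleton_iff, mem_compl_iff, mem_univ,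
            and_true, mem_setOf_eq, Option.some.injEq, Prod.mk.injEq, reduceCtorEq, false_or]
          constructor
          · rintro (⟨rfl, hkr, -⟩ | ha)
            · exact ⟨(x, r), Or.inl ⟨rfl, fun h => hkr h.symm⟩, rfl⟩
            · exact ⟨(y, r), Or.inr ha, rfl⟩
          · rintro ⟨p, h, rfl⟩
            rcases h with ⟨h1, h2⟩ | ha
            · exact Or.inl ⟨h1.symm, fun h => h2 h.symm, hx⟩
            · exact Or.inr ha
      have hdisj : Disjoint (({x} ×ˢ ({k}ᶜ : Set (Multiplicative (ZMod n)))))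
          ({y : G | F.Adj (some x) (some y)} ×ˢ (univ : Set (Multiplicative (ZMod n)))) := by
        rw [Set.disjoint_left]
        rintro ⟨a, b⟩ ⟨ha, -⟩ ⟨hb, -⟩
        rw [mem_singleton_iff] at ha
        exact F.irrefl (ha ▸ hb)
      rw [he, ncard_insert_of_notMem (by simp),
        ncard_image_of_injective _ (Option.some_injective _),
        ncard_union_eq hdisj (toFinite _) (toFinite _), ncard_sprod, ncard_sprod,
        ncard_singleton, ncard_compl_singleton, card_M_adj F hF x hx, ncard_univ_mult]
      omega
    · have he : (Hgraph F n).neighborSet (some (x, k))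
          = some '' (({y : G | F.Adj (some x) (some y)} ×ˢ (univ : Set (Multiplicative (ZMod n))))) := by
        ext w
        rcases w with _ | ⟨y, r⟩
        · simp [SimpleGraph.mem_neighborSet, Hgraph_adj_some_none F, hx]
        · simp only [SimpleGraph.mem_neighborSet, Hgraph_adj_some_some F, mem_image,
            mem_prod, mem_univ, and_true, mem_setOf_eq, Option.some.injEq, Prod.mk.injEq]
          constructor
          · rintro (⟨rfl, -, ha⟩ | ha)
            · exact absurd ha hx
            · exact ⟨(y, r), ha, rfl⟩
          · rintro ⟨p, ha, rfl⟩
            exact Or.inr ha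
      rw [he, ncard_image_of_injective _ (Option.some_injective _), ncard_sprod,
        card_M_nonadj F hF x hx, ncard_univ_mult]

end Aux3
theorem stmt13 {G : Type*} [Group G] [Fintype G]
    (𝓕 : Set (SimpleGraph (Option G)))
    (hfac : IsKFactorization 2 𝓕) (hrot : IsRotational 𝓕) (n : ℕ) (hn : 1 ≤ n) :
    ∃ 𝓖 : Set (SimpleGraph (Option (G × Multiplicative (ZMod n)))),
      IsKFactorization (2 * n) 𝓖 ∧ IsRotational 𝓖 := by
  haveI : NeZero n := ⟨by omega⟩
  refine ⟨(fun F => Hgraph F n) '' 𝓕, ⟨?_, ?_⟩, ?_⟩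
  · rintro H ⟨F, hF, rfl⟩
    exact Hdeg F (hfac.1 F hF) n hn
  · rintro u v huv
    rcases u with _ | ⟨x, k⟩ <;> rcases v with _ | ⟨y, r⟩
    · exact absurd rfl huv
    · obtain ⟨F, ⟨hF, hFa⟩, huniq⟩ := hfac.2 none (some y) (by simp)
      refine ⟨Hgraph F n, ⟨⟨F, hF, rfl⟩, (Hgraph_adj_none_some F y r).2 hFa⟩, ?_⟩
      rintro H ⟨⟨F', hF', rfl⟩, hadj⟩
      rw [huniq F' ⟨hF', (Hgraph_adj_none_some F' y r).1 hadj⟩]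
    · obtain ⟨F, ⟨hF, hFa⟩, huniq⟩ := hfac.2 none (some x) (by simp)
      refine ⟨Hgraph F n, ⟨⟨F, hF, rfl⟩, (Hgraph_adj_some_none F x k).2 hFa⟩, ?_⟩
      rintro H ⟨⟨F', hF', rfl⟩, hadj⟩
      rw [huniq F' ⟨hF', (Hgraph_adj_some_none F' x k).1 hadj⟩]
    · by_cases hxy : x = y
      · subst hxy
        have hkr : k ≠ r := by simpa using huv
        obtain ⟨F, ⟨hF, hFa⟩, huniq⟩ := hfac.2 none (some x) (by simp)
        refine ⟨Hgraph F n, ⟨⟨F, hF, rfl⟩,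
          (Hgraph_adj_some_some F x x k r).2 (Or.inl ⟨rfl, hkr, hFa⟩)⟩, ?_⟩
        rintro H ⟨⟨F', hF', rfl⟩, hadj⟩
        rcases (Hgraph_adj_some_some F' x x k r).1 hadj with ⟨-, -, ha⟩ | ha
        · rw [huniq F' ⟨hF', ha⟩]
        · exact absurd ha (F'.irrefl)
      · obtain ⟨F, ⟨hF, hFa⟩, huniq⟩ := hfac.2 (some x) (some y) (by simp [hxy])
        refine ⟨Hgraph F n, ⟨⟨F, hF, rfl⟩,
          (Hgraph_adj_some_some F x y k r).2 (Or.inr hFa)⟩, ?_⟩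
        rintro H ⟨⟨F', hF', rfl⟩, hadj⟩
        rcases (Hgraph_adj_some_some F' x y k r).1 hadj with ⟨h, -, -⟩ | ha
        · exact absurd h hxy
        · rw [huniq F' ⟨hF', ha⟩]
  · rintro H ⟨F, hF, rfl⟩ ⟨g, t⟩
    rw [shiftG_Hgraph]
    exact ⟨shiftG F g, hrot F hF g, rfl⟩
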